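/- Let I ⊂ ℝ be a compact set, θ a probability measure on I whose topological support is I, g : I → ℝ continuous and C : I → (0,∞) continuous. Then lim_{ε → 0⁺} [ log( ∫_I C(h) ε^{g(h)} θ(dh) ) / log ε ] = min_{h ∈ I} g(h) (Laplace-method evaluation of the small-ε scaling exponent of a θ-mixture of power laws). -/

import Mathlib

open MeasureTheory Real Filter

/-- **Laplace-method evaluation of the small-`ε` scaling exponent of a mixture of power
laws.** Let `I ⊂ ℝ` be compact, `θ` a probability measure on `I` whose topological
support is `I`, `g : I → ℝ` continuous and `C : I → (0,∞)` continuous. Then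
`log(∫_I C(h) ε^{g(h)} θ(dh)) / log ε → min_{h∈I} g(h)` as `ε → 0⁺`. -/
theorem stmt_17 (I : Set ℝ) (hIcomp : IsCompact I) (hIne : I.Nonempty)
    (θ : Measure ℝ) [IsProbabilityMeasure θ]
    (hθI : θ Iᶜ = 0)
    (hθfull : ∀ h ∈ I, ∀ r : ℝ, 0 < r → 0 < θ (Metric.ball h r))
    (g : ℝ → ℝ) (hg : ContinuousOn g I)
    (C : ℝ → ℝ) (hC : ContinuousOn C I) (hCpos : ∀ h ∈ I, 0 < C h) :
    Tendsto (fun ε : ℝ => Real.log (∫ h in I, C h * ε ^ (g h) ∂θ) / Real.log ε)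
      (nhdsWithin 0 (Set.Ioi 0)) (nhds (sInf (g '' I))) := by
  have hImeas : MeasurableSet I := hIcomp.measurableSet
  have hθIeq : θ I = 1 := (prob_compl_eq_zero_iff hImeas).1 hθI
  obtain ⟨h₀, h₀I, hmin⟩ := hIcomp.exists_isMinOn hIne hg
  obtain ⟨h₁, h₁I, hmax⟩ := hIcomp.exists_isMaxOn hIne hg
  obtain ⟨hc, hcI, hcmin⟩ := hIcomp.exists_isMinOn hIne hC
  obtain ⟨hM, hMI, hMmax⟩ := hIcomp.exists_isMaxOn hIne hC
  set m := g h₀ with hmdef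
  set K := g h₁ with hKdef
  set c := C hc with hcdef
  set M := C hM with hMdef
  have hcpos : 0 < c := hCpos _ hcI
  have hMpos : 0 < M := hCpos _ hMI
  have hsInf : sInf (g '' I) = m := by
    apply IsLeast.csInf_eq
    exact ⟨⟨h₀, h₀I, rfl⟩, by rintro y ⟨h, hI, rfl⟩; exact hmin hI⟩
  rw [hsInf]
  -- integrability
  have hint : ∀ ε : ℝ, 0 < ε → IntegrableOn (fun h => C h * ε ^ g h) I θ := by
    intro ε hε
    apply ContinuousOn.integrableOn_compact hIcomp
    have hcont : Continuous fun y : ℝ => ε ^ y := by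
      have : (fun y : ℝ => ε ^ y) = fun y => Real.exp (Real.log ε * y) :=
        funext fun y => Real.rpow_def_of_pos hε y
      rw [this]
      exact Real.continuous_exp.comp (continuous_const.mul continuous_id)
    exact hC.mul (hcont.comp_continuousOn hg)
  -- upper bound on integral
  have key_up : ∀ ε ∈ Set.Ioo (0:ℝ) 1,
      ∫ h in I, C h * ε ^ g h ∂θ ≤ M * ε ^ m := by
    rintro ε ⟨hε0, hε1⟩
    have h1 : ∫ h in I, C h * ε ^ g h ∂θ ≤ ∫ _ in I, M * ε ^ m ∂θ := by
      refine setIntegral_mono_on (hint ε hε0) ?_ hImeas ?_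
      · exact integrableOn_const (measure_ne_top _ _)
      · intro h hI
        have h2 : ε ^ g h ≤ ε ^ m := rpow_le_rpow_of_exponent_ge hε0 hε1.le (hmin hI)
        exact mul_le_mul (hMmax hI) h2 (le_of_lt (rpow_pos_of_pos hε0 _)) hMpos.le
    calc ∫ h in I, C h * ε ^ g h ∂θ ≤ ∫ _ in I, M * ε ^ m ∂θ := h1
      _ = M * ε ^ m := by rw [setIntegral_const, measureReal_def, hθIeq]; simp
  -- lower bound on integral (crude, for positivity)
  have key_low : ∀ ε ∈ Set.Ioo (0:ℝ) 1,
      c * ε ^ K ≤ ∫ h in I, C h * ε ^ g h ∂θ := by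
    rintro ε ⟨hε0, hε1⟩
    have h1 : ∫ _ in I, c * ε ^ K ∂θ ≤ ∫ h in I, C h * ε ^ g h ∂θ := by
      refine setIntegral_mono_on ?_ (hint ε hε0) hImeas ?_
      · exact integrableOn_const (measure_ne_top _ _)
      · intro h hI
        have h2 : ε ^ K ≤ ε ^ g h := rpow_le_rpow_of_exponent_ge hε0 hε1.le (hmax hI)
        exact mul_le_mul (hcmin hI) h2 (le_of_lt (rpow_pos_of_pos hε0 _)) (hCpos h hI).le
    calc c * ε ^ K = ∫ _ in I, c * ε ^ K ∂θ := by rw [setIntegral_const, measureReal_def, hθIeq]; simp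
      _ ≤ _ := h1
  have hFpos : ∀ ε ∈ Set.Ioo (0:ℝ) 1, 0 < ∫ h in I, C h * ε ^ g h ∂θ := by
    intro ε hε
    exact lt_of_lt_of_le (mul_pos hcpos (rpow_pos_of_pos hε.1 _)) (key_low ε hε)
  have hinv0 : Tendsto (fun ε : ℝ => (Real.log ε)⁻¹) (nhdsWithin 0 (Set.Ioi 0)) (nhds 0) :=
    by
    have h1 : Tendsto (fun ε : ℝ => (-Real.log ε)⁻¹) (nhdsWithin 0 (Set.Ioi 0)) (nhds 0) :=
      tendsto_inv_atTop_zero.comp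
        (tendsto_neg_atBot_atTop.comp Real.tendsto_log_nhdsGT_zero)
    have h2 := h1.neg
    rw [neg_zero] at h2
    simpa [inv_neg] using h2
  have haux : ∀ A B : ℝ, Tendsto (fun ε : ℝ => A + B / Real.log ε)
      (nhdsWithin 0 (Set.Ioi 0)) (nhds A) := by
    intro A B
    have h2 : Tendsto (fun ε : ℝ => B * (Real.log ε)⁻¹)
        (nhdsWithin 0 (Set.Ioi 0)) (nhds (B * 0)) := hinv0.const_mul _
    rw [mul_zero] at h2
    have h3 := (tendsto_const_nhds (x := A)).add h2
    rw [add_zero] at h3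
    simpa [div_eq_mul_inv] using h3
  have hIoo : Set.Ioo (0:ℝ) 1 ∈ nhdsWithin (0:ℝ) (Set.Ioi 0) :=
    Ioo_mem_nhdsGT_of_mem (Set.left_mem_Ico.2 one_pos)
  rw [tendsto_order]
  constructor
  · intro a ha
    filter_upwards [(haux m (Real.log M)).eventually (eventually_gt_nhds ha), hIoo]
      with ε hε1 hε2
    have hlog : Real.log ε < 0 := Real.log_neg hε2.1 hε2.2
    have hF := hFpos ε hε2
    have hle : Real.log (∫ h in I, C h * ε ^ g h ∂θ) ≤ Real.log M + m * Real.log ε := by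
      calc Real.log (∫ h in I, C h * ε ^ g h ∂θ) ≤ Real.log (M * ε ^ m) :=
            Real.log_le_log hF (key_up ε hε2)
        _ = Real.log M + m * Real.log ε := by
            rw [Real.log_mul hMpos.ne' (ne_of_gt (rpow_pos_of_pos hε2.1 _)),
              Real.log_rpow hε2.1]
    have hdiv : (Real.log M + m * Real.log ε) / Real.log ε
        ≤ Real.log (∫ h in I, C h * ε ^ g h ∂θ) / Real.log ε :=
      div_le_div_of_nonpos_of_le hlog.le hle
    have heq : (Real.log M + m * Real.log ε) / Real.log ε = m + Real.log M / Real.log ε := by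
      rw [add_div, mul_div_cancel_right₀ _ hlog.ne, add_comm]
    rw [heq] at hdiv
    exact lt_of_lt_of_le hε1 hdiv
  · intro b hb
    set δ := (b - m) / 2 with hδdef
    have hδ : 0 < δ := by simp only [hδdef]; linarith
    obtain ⟨r, hr, hball⟩ := Metric.continuousWithinAt_iff.1 (hg h₀ h₀I) δ hδ
    set B := Metric.ball h₀ r ∩ I with hBdef
    have hBmeas : MeasurableSet B := measurableSet_ball.inter hImeas
    have hθB : 0 < θ B := by
      have h1 := hθfull h₀ h₀I r hr
      have h2 : θ (Metric.ball h₀ r) ≤ θ B + θ (Metric.ball h₀ r \ I) :=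
        measure_le_inter_add_diff θ _ _
      have h3 : θ (Metric.ball h₀ r \ I) = 0 :=
        le_antisymm (le_trans (measure_mono fun x hx => hx.2) hθI.le) zero_le
      rw [h3, add_zero] at h2
      exact lt_of_lt_of_le h1 h2
    have hθBfin : θ B ≠ ⊤ := measure_ne_top θ B
    have hθBR : 0 < (θ B).toReal := ENNReal.toReal_pos hθB.ne' hθBfin
    have key_low2 : ∀ ε ∈ Set.Ioo (0:ℝ) 1,
        (θ B).toReal * (c * ε ^ (m + δ)) ≤ ∫ h in I, C h * ε ^ g h ∂θ := by
      rintro ε ⟨hε0, hε1⟩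
      have hi := hint ε hε0
      have h2 : ∫ h in B, C h * ε ^ g h ∂θ ≤ ∫ h in I, C h * ε ^ g h ∂θ := by
        refine setIntegral_mono_set hi ?_ (HasSubset.Subset.eventuallyLE Set.inter_subset_right)
        exact (ae_restrict_iff' hImeas).2 (ae_of_all _ fun h hI => mul_nonneg (hCpos h hI).le (rpow_pos_of_pos hε0 _).le)
      have h1 : (θ B).toReal * (c * ε ^ (m + δ)) ≤ ∫ h in B, C h * ε ^ g h ∂θ := by
        have h4 : ∫ _ in B, c * ε ^ (m + δ) ∂θ ≤ ∫ h in B, C h * ε ^ g h ∂θ := by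
          refine setIntegral_mono_on ?_ (hi.mono_set Set.inter_subset_right) hBmeas ?_
          · exact integrableOn_const hθBfin
          · intro h hB
            have hI' : h ∈ I := hB.2
            have hd : dist (g h) (g h₀) < δ := hball hI' (Metric.mem_ball.1 hB.1)
            have hgh : g h ≤ m + δ := by
              have := abs_lt.1 (by rwa [Real.dist_eq] at hd)
              linarith [this.2]
            have h5 : ε ^ (m + δ) ≤ ε ^ g h := rpow_le_rpow_of_exponent_ge hε0 hε1.le hgh
            exact mul_le_mul (hcmin hI') h5 (le_of_lt (rpow_pos_of_pos hε0 _)) (hCpos h hI').le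
        calc (θ B).toReal * (c * ε ^ (m + δ)) = ∫ _ in B, c * ε ^ (m + δ) ∂θ := by
              rw [setIntegral_const]; simp [smul_eq_mul, measureReal_def]
          _ ≤ _ := h4
      linarith
    have hmd : m + δ < b := by simp only [hδdef]; linarith
    filter_upwards [(haux (m + δ) (Real.log ((θ B).toReal * c))).eventually
      (eventually_lt_nhds hmd), hIoo] with ε hε1 hε2
    have hlog : Real.log ε < 0 := Real.log_neg hε2.1 hε2.2
    have hge : Real.log ((θ B).toReal * c) + (m + δ) * Real.log ε
        ≤ Real.log (∫ h in I, C h * ε ^ g h ∂θ) := by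
      have := Real.log_le_log (mul_pos hθBR (mul_pos hcpos (rpow_pos_of_pos hε2.1 _))) (key_low2 ε hε2)
      calc Real.log ((θ B).toReal * c) + (m + δ) * Real.log ε
          = Real.log ((θ B).toReal * (c * ε ^ (m + δ))) := by
            rw [Real.log_mul hθBR.ne' hcpos.ne',
              Real.log_mul hθBR.ne' (mul_pos hcpos (rpow_pos_of_pos hε2.1 _)).ne',
              Real.log_mul hcpos.ne' (ne_of_gt (rpow_pos_of_pos hε2.1 _)),
              Real.log_rpow hε2.1]
            ring_nf
        _ ≤ _ := this
    have hdiv : Real.log (∫ h in I, C h * ε ^ g h ∂θ) / Real.log ε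
        ≤ (Real.log ((θ B).toReal * c) + (m + δ) * Real.log ε) / Real.log ε :=
      div_le_div_of_nonpos_of_le hlog.le hge
    have heq : (Real.log ((θ B).toReal * c) + (m + δ) * Real.log ε) / Real.log ε
        = (m + δ) + Real.log ((θ B).toReal * c) / Real.log ε := by
      rw [add_div, mul_div_cancel_right₀ _ hlog.ne, add_comm]
    rw [heq] at hdiv
    exact lt_of_le_of_lt hdiv hε1
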